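/- Let μ be a compactly supported probability measure on ℝ with a_μ := inf(supp μ) and b_μ := sup(supp μ). If z ∈ ℂ∖supp μ satisfies G_μ′(z) = 0 (the complex derivative of the Stieltjes transform vanishes at z), then Re z ∈ (a_μ, b_μ) and |Im z| ≤ b_μ − a_μ. -/

import Mathlib

open MeasureTheory Filter Set

noncomputable section

/-- The topological support of a Borel measure on `ℝ`. -/
def msupp (μ : Measure ℝ) : Set ℝ := {x : ℝ | ∀ U ∈ nhds x, μ U ≠ 0}

/-- Compact support: some compact set has full measure. -/
def HasCompactSupp (μ : Measure ℝ) : Prop := ∃ K : Set ℝ, IsCompact K ∧ μ K = 1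

/-- `a_μ`, the infimum of the support. -/
def aInf (μ : Measure ℝ) : ℝ := sInf (msupp μ)

/-- `b_μ`, the supremum of the support. -/
def bSup (μ : Measure ℝ) : ℝ := sSup (msupp μ)

/-- The (real) Stieltjes transform `G_μ(z) = ∫ (λ - z)⁻¹ dμ(λ)`. -/
def Gst (μ : Measure ℝ) (z : ℝ) : ℝ := ∫ l, (l - z)⁻¹ ∂μ

/-- `G_μ(a_μ) = lim_{z ↑ a_μ} G_μ(z) ∈ (0,∞]`, as the supremum (in `EReal`) of the values of
`G_μ` on `(-∞, a_μ)` (the two agree since `G_μ` is increasing there). -/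
def GaSup (μ : Measure ℝ) : EReal :=
  sSup ((fun z => ((Gst μ z : ℝ) : EReal)) '' Set.Iio (aInf μ))

/-- `G_μ(b_μ) = lim_{z ↓ b_μ} G_μ(z) ∈ [-∞,0)`, as the infimum (in `EReal`) of the values of
`G_μ` on `(b_μ, ∞)` (the two agree since `G_μ` is increasing there). -/
def GbInf (μ : Measure ℝ) : EReal :=
  sInf ((fun z => ((Gst μ z : ℝ) : EReal)) '' Set.Ioi (bSup μ))

/-- The interval `D̂_μ = (-G_μ(a_μ), -G_μ(b_μ)) ⊆ ℝ`. -/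
def Dhat (μ : Measure ℝ) : Set ℝ :=
  {u : ℝ | -(GaSup μ) < (u : EReal) ∧ (u : EReal) < -(GbInf μ)}

/-- The inverse `G_μ^⟨-1⟩` of the restriction of `G_μ` to `ℝ ∖ [a_μ, b_μ]`. -/
def Ginv (μ : Measure ℝ) (g : ℝ) : ℝ :=
  Function.invFunOn (Gst μ) (Set.Iio (aInf μ) ∪ Set.Ioi (bSup μ)) g

/-- The real `R`-transform `R̂_μ(u) = G_μ^⟨-1⟩(-u) - u⁻¹`, meaningful for `u ∈ D̂_μ ∖ {0}`. -/
def Rhat (μ : Measure ℝ) (u : ℝ) : ℝ := Ginv μ (-u) - u⁻¹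

/-- `ρ` is a free additive convolution of `μ` and `ν`. -/
def IsFreeAdd (μ ν ρ : Measure ℝ) : Prop :=
  IsProbabilityMeasure ρ ∧ HasCompactSupp ρ ∧
  ∃ ε > (0 : ℝ), ∀ u : ℝ, u ∈ Set.Ioo (-ε) ε → u ≠ 0 →
    u ∈ Dhat ρ ∧ u ∈ Dhat μ ∧ u ∈ Dhat ν ∧ Rhat ρ u = Rhat μ u + Rhat ν u

/-- `μ` is nondegenerate: not a point mass. -/
def Nondeg (μ : Measure ℝ) : Prop := ¬ ∃ c : ℝ, μ = Measure.dirac c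

/-- The logarithmic potential `U_ρ(z) = ∫ log |z - λ| dρ(λ)`. -/
def Upot (ρ : Measure ℝ) (z : ℝ) : ℝ := ∫ l, Real.log |z - l| ∂ρ

/-- `E_{μ,ν,z}(g) = ∫₀^g s R̂_μ'(-s) ds + ∫ log (λ - z + R̂_μ(-g)) dν(λ)`. -/
def Efun (μ ν : Measure ℝ) (z : ℝ) (g : ℝ) : ℝ :=
  (∫ s in (0:ℝ)..g, s * deriv (Rhat μ) (-s)) + ∫ l, Real.log (l - z + Rhat μ (-g)) ∂ν

/-- The domain `Ê_{μ,ν,z}` of `E_{μ,ν,z}`. -/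
def Ehat (μ ν : Measure ℝ) (z : ℝ) : Set ℝ :=
  {g : ℝ | -g ∈ Dhat μ ∧ g ≠ 0 ∧ z - Rhat μ (-g) < aInf ν}

/-- `F̂_{μ,ν}(h) = R̂_μ(-G_ν(h)) + h`. -/
def Fhat (μ ν : Measure ℝ) (h : ℝ) : ℝ := Rhat μ (-(Gst ν h)) + h

/-- The domain of `F̂_{μ,ν}`. -/
def FhatDom (μ ν : Measure ℝ) : Set ℝ := {h : ℝ | h < aInf ν ∧ -(Gst ν h) ∈ Dhat μ}

/-- `Ĥ_{μ,ν}`: points of the domain to the left of which `F̂_{μ,ν}'` is positive. -/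
def Hhat (μ ν : Measure ℝ) : Set ℝ :=
  {h : ℝ | h ∈ FhatDom μ ν ∧ ∀ t ∈ FhatDom μ ν, t < h → 0 < deriv (Fhat μ ν) t}

/-- `h*_{μ,ν} = sup Ĥ_{μ,ν}`. -/
def hstar (μ ν : Measure ℝ) : ℝ := sSup (Hhat μ ν)

end


/-- The complex Stieltjes transform. -/
noncomputable def Gc (μ : MeasureTheory.Measure ℝ) (z : ℂ) : ℂ := ∫ l, ((l : ℂ) - z)⁻¹ ∂μ

section Statement18Aux

open MeasureTheory Metric

lemma msupp_isClosed (μ : MeasureTheory.Measure ℝ) : IsClosed (msupp μ) := by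
  rw [← isOpen_compl_iff, isOpen_iff_mem_nhds]
  intro x hx
  simp only [Set.mem_compl_iff, msupp, Set.mem_setOf_eq] at hx
  push_neg at hx
  obtain ⟨U, hU, hU0⟩ := hx
  refine Filter.mem_of_superset (interior_mem_nhds.mpr hU) ?_
  intro y hy hymem
  exact hymem U (mem_interior_iff_mem_nhds.1 hy) hU0

lemma msupp_compl_null (μ : MeasureTheory.Measure ℝ) : μ (msupp μ)ᶜ = 0 := by
  refine measure_null_of_locally_null _ fun x hx => ?_
  simp only [Set.mem_compl_iff, msupp, Set.mem_setOf_eq] at hx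
  push_neg at hx
  obtain ⟨U, hU, hU0⟩ := hx
  exact ⟨U, nhdsWithin_le_nhds hU, hU0⟩

end Statement18Aux

/-- critical points of the complex Stieltjes transform lie in the strip
`Re z ∈ (a_μ, b_μ)`, `|Im z| ≤ b_μ - a_μ`. -/
theorem statement18 (μ : MeasureTheory.Measure ℝ) [MeasureTheory.IsProbabilityMeasure μ]
    (hc : HasCompactSupp μ) (z : ℂ)
    (hz : z ∉ (fun x : ℝ => (x : ℂ)) '' msupp μ) (hd : deriv (Gc μ) z = 0) :
    aInf μ < z.re ∧ z.re < bSup μ ∧ |z.im| ≤ bSup μ - aInf μ := by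
  classical
  open MeasureTheory Metric in
  obtain ⟨K, hK, hK1⟩ := hc
  set S := msupp μ with hSdef
  have hScl : IsClosed S := msupp_isClosed μ
  have hSnull : μ Sᶜ = 0 := msupp_compl_null μ
  have hae : ∀ᵐ a ∂μ, a ∈ S := by
    rw [MeasureTheory.ae_iff]
    simpa [Set.compl_def] using hSnull
  have haeNeBot : (MeasureTheory.ae μ).NeBot :=
    MeasureTheory.ae_neBot.2 (IsProbabilityMeasure.ne_zero μ)
  have hSK : S ⊆ K := by
    intro x hx
    by_contra hxK
    have hKc : μ Kᶜ = 0 := by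
      have := measure_compl hK.isClosed.measurableSet (measure_ne_top μ K)
      rw [hK1, measure_univ] at this
      simpa using this
    exact hx Kᶜ (hK.isClosed.isOpen_compl.mem_nhds hxK) hKc
  have hSne : S.Nonempty := by
    rw [Set.nonempty_iff_ne_empty]
    intro h
    have : μ Set.univ = 0 := by rw [← Set.compl_empty, ← h]; exact hSnull
    simp [measure_univ] at this
  have hScpt : IsCompact S := hK.of_isClosed_subset hScl hSK
  set a := aInf μ with hadef
  set b := bSup μ with hbdef
  have haS : ∀ t ∈ S, a ≤ t := fun t ht => csInf_le hScpt.bddBelow ht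
  have hbS : ∀ t ∈ S, t ≤ b := fun t ht => le_csSup hScpt.bddAbove ht
  have hab : a ≤ b := le_trans (haS _ hSne.choose_spec) (hbS _ hSne.choose_spec)
  -- distance from z to the (embedded) support
  set T : Set ℂ := (fun x : ℝ => (x : ℂ)) '' S with hTdef
  have hTcl : IsClosed T := (hScpt.image Complex.continuous_ofReal).isClosed
  have hTne : T.Nonempty := hSne.image _
  have hδ : 0 < infDist z T := (hTcl.notMem_iff_infDist_pos hTne).1 hz
  set δ := infDist z T with hδdef
  have hdist : ∀ t ∈ S, δ ≤ ‖(t : ℂ) - z‖ := by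
    intro t ht
    calc δ ≤ dist z ((t : ℂ)) := infDist_le_dist_of_mem ⟨t, ht, rfl⟩
      _ = ‖(t : ℂ) - z‖ := by rw [dist_eq_norm, norm_sub_rev]
  -- measurability facts
  have hmeasF : ∀ w : ℂ, AEStronglyMeasurable (fun t : ℝ => ((t : ℂ) - w)⁻¹) μ :=
    fun w => ((Complex.measurable_ofReal.sub measurable_const).inv).aestronglyMeasurable
  have hmeasF' : AEStronglyMeasurable (fun t : ℝ => (((t : ℂ) - z) ^ 2)⁻¹) μ :=
    (((Complex.measurable_ofReal.sub measurable_const).pow_const 2).inv).aestronglyMeasurable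
  -- lower bound on distances within the ball
  have hlow : ∀ t ∈ S, ∀ w ∈ ball z (δ / 2), δ / 2 ≤ ‖(t : ℂ) - w‖ := by
    intro t ht w hw
    have h1 : δ ≤ ‖(t : ℂ) - z‖ := hdist t ht
    have htr : ‖(t : ℂ) - z‖ ≤ ‖(t : ℂ) - w‖ + ‖w - z‖ := by
      have h : (t : ℂ) - z = ((t : ℂ) - w) + (w - z) := by ring
      rw [h]; exact norm_add_le _ _
    have h2 : ‖w - z‖ < δ / 2 := by rwa [mem_ball, dist_eq_norm] at hw
    linarith
  -- integrability of the integrand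
  have hFint : MeasureTheory.Integrable (fun t : ℝ => ((t : ℂ) - z)⁻¹) μ := by
    refine MeasureTheory.Integrable.mono' (integrable_const δ⁻¹) (hmeasF z) ?_
    filter_upwards [hae] with t ht
    rw [norm_inv]
    exact inv_anti₀ hδ (hdist t ht)
  -- the dominated-derivative theorem
  have key := hasDerivAt_integral_of_dominated_loc_of_deriv_le (μ := μ) (x₀ := z)
      (F := fun (w : ℂ) (t : ℝ) => ((t : ℂ) - w)⁻¹)
      (F' := fun (w : ℂ) (t : ℝ) => (((t : ℂ) - w) ^ 2)⁻¹)
      (bound := fun _ : ℝ => ((δ / 2) ^ 2)⁻¹) (ball_mem_nhds z (half_pos hδ))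
      (Filter.Eventually.of_forall fun w => hmeasF w) hFint hmeasF'
      (by
        filter_upwards [hae] with t ht w hw
        rw [norm_inv, norm_pow]
        exact inv_anti₀ (by positivity)
          (pow_le_pow_left₀ (half_pos hδ).le (hlow t ht w hw) 2))
      (integrable_const _)
      (by
        filter_upwards [hae] with t ht w hw
        have hne : (t : ℂ) - w ≠ 0 := by
          intro h0
          have := hlow t ht w hw
          rw [h0, norm_zero] at this
          linarith [half_pos hδ]
        have h1 : HasDerivAt (fun w : ℂ => (t : ℂ) - w) (-1) w :=
          (hasDerivAt_id w).const_sub (t : ℂ)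
        have h2 := h1.inv hne
        convert h2 using 1
        · rfl
        · rfl
        · ring)
  obtain ⟨hIint, hderiv⟩ := key
  have hI : (∫ t : ℝ, (((t : ℂ) - z) ^ 2)⁻¹ ∂μ) = 0 := by
    have hGd : deriv (Gc μ) z = ∫ t : ℝ, (((t : ℂ) - z) ^ 2)⁻¹ ∂μ := hderiv.deriv
    rw [← hGd, hd]
  set x := z.re with hxdef
  set y := z.im with hydef
  -- explicit real and imaginary parts of the integrand
  have hRe : ∀ t : ℝ, ((((t : ℂ) - z) ^ 2)⁻¹).re
      = ((t - x) ^ 2 - y ^ 2) / (((t - x) ^ 2 + y ^ 2) ^ 2) := by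
    intro t
    rw [hxdef, hydef]
    rw [Complex.inv_re]
    simp only [pow_two, Complex.mul_re, Complex.mul_im, Complex.normSq_apply,
      Complex.sub_re, Complex.sub_im, Complex.ofReal_re, Complex.ofReal_im]
    ring_nf
  have hIm : ∀ t : ℝ, ((((t : ℂ) - z) ^ 2)⁻¹).im
      = (2 * (t - x) * y) / (((t - x) ^ 2 + y ^ 2) ^ 2) := by
    intro t
    rw [hxdef, hydef]
    rw [Complex.inv_im]
    simp only [pow_two, Complex.mul_re, Complex.mul_im, Complex.normSq_apply,
      Complex.sub_re, Complex.sub_im, Complex.ofReal_re, Complex.ofReal_im]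
    ring_nf
  have hNpos : ∀ t ∈ S, 0 < (t - x) ^ 2 + y ^ 2 := by
    intro t ht
    have h0 : (0 : ℝ) < ‖(t : ℂ) - z‖ := lt_of_lt_of_le hδ (hdist t ht)
    have hsq : ‖(t : ℂ) - z‖ ^ 2 = (t - x) ^ 2 + y ^ 2 := by
      rw [Complex.sq_norm]
      simp only [Complex.normSq_apply, Complex.sub_re, Complex.sub_im, Complex.ofReal_re,
        Complex.ofReal_im]
      ring
    rw [← hsq]
    positivity
  -- the real and imaginary integrals vanish
  have hre0 : ∫ t : ℝ, ((((t : ℂ) - z) ^ 2)⁻¹).re ∂μ = 0 := by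
    have h1 := integral_re (𝕜 := ℂ) hIint
    simp only [RCLike.re_to_complex] at h1
    rw [hI] at h1
    simpa using h1
  have him0 : ∫ t : ℝ, ((((t : ℂ) - z) ^ 2)⁻¹).im ∂μ = 0 := by
    have h1 := integral_im (𝕜 := ℂ) hIint
    simp only [RCLike.im_to_complex] at h1
    rw [hI] at h1
    simpa using h1
  -- if the measure were a.e. concentrated at x, the integral would be nonzero
  have hkey : y ≠ 0 → ¬ (∀ᵐ t ∂μ, (t : ℝ) = x) := by
    intro hy h
    have hconst : (∫ t : ℝ, (((t : ℂ) - z) ^ 2)⁻¹ ∂μ) = (((x : ℂ) - z) ^ 2)⁻¹ := by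
      rw [MeasureTheory.integral_congr_ae
          (g := fun _ : ℝ => (((x : ℂ) - z) ^ 2)⁻¹) (h.mono fun t ht => by rw [ht]),
        MeasureTheory.integral_const]
      simp
    rw [hI] at hconst
    have hne : ((x : ℂ) - z) ≠ 0 := by
      intro h0
      apply hy
      have := congrArg Complex.im h0
      simpa [Complex.sub_im] using this
    exact (inv_ne_zero (pow_ne_zero 2 hne)) hconst.symm
  -- Step 1: y ≠ 0
  have hy : y ≠ 0 := by
    intro hy0
    have hxS : (x : ℝ) ∉ S := by
      intro hxS
      refine hz ⟨x, hxS, Complex.ext (Complex.ofReal_re x) ?_⟩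
      rw [Complex.ofReal_im]
      exact hy0.symm
    have hnonneg : 0 ≤ᵐ[μ] fun t : ℝ => ((((t : ℂ) - z) ^ 2)⁻¹).re := by
      filter_upwards [hae] with t ht
      rw [hRe t, hy0]
      have h1 : ((t - x) ^ 2 - (0 : ℝ) ^ 2) = (t - x) ^ 2 := by ring
      rw [h1]
      positivity
    have heq := (MeasureTheory.integral_eq_zero_iff_of_nonneg_ae hnonneg hIint.re).1 hre0
    obtain ⟨t, ht, h0⟩ := (hae.and heq).exists
    have htx : t ≠ x := fun h => hxS (h ▸ ht)
    have hpos : 0 < ((((t : ℂ) - z) ^ 2)⁻¹).re := by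
      rw [hRe t, hy0]
      have h1 : ((t - x) ^ 2 - (0 : ℝ) ^ 2) = (t - x) ^ 2 := by ring
      rw [h1]
      have h2 : (0 : ℝ) < (t - x) ^ 2 :=
        lt_of_le_of_ne (sq_nonneg _) (Ne.symm (pow_ne_zero 2 (sub_ne_zero.2 htx)))
      have h3 : (0 : ℝ) < ((t - x) ^ 2 + (0 : ℝ) ^ 2) ^ 2 := by positivity
      exact div_pos h2 h3
    have h0' : ((((t : ℂ) - z) ^ 2)⁻¹).re = 0 := h0
    rw [h0'] at hpos
    exact lt_irrefl _ hpos
  -- Step 2: a < x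
  have hax : a < x := by
    by_contra hax
    push_neg at hax
    have hnonneg : 0 ≤ᵐ[μ] fun t : ℝ => ((((t : ℂ) - z) ^ 2)⁻¹).im * y := by
      filter_upwards [hae] with t ht
      rw [hIm t]
      have h1 : x ≤ t := le_trans hax (haS t ht)
      have h2 : 0 < ((t - x) ^ 2 + y ^ 2) ^ 2 := by positivity
      have h3 : 0 ≤ 2 * (t - x) * y * y := by nlinarith [sq_nonneg y]
      rw [div_mul_eq_mul_div]
      positivity
    have hint : MeasureTheory.Integrable (fun t : ℝ => ((((t : ℂ) - z) ^ 2)⁻¹).im * y) μ :=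
      hIint.im.mul_const y
    have hiz : ∫ t : ℝ, ((((t : ℂ) - z) ^ 2)⁻¹).im * y ∂μ = 0 := by
      rw [MeasureTheory.integral_mul_const, him0, zero_mul]
    have heq := (MeasureTheory.integral_eq_zero_iff_of_nonneg_ae hnonneg hint).1 hiz
    have haex : ∀ᵐ t ∂μ, (t : ℝ) = x := by
      filter_upwards [hae, heq] with t ht h0
      simp only [Pi.zero_apply] at h0
      rw [hIm t] at h0
      have h2 : (0 : ℝ) < ((t - x) ^ 2 + y ^ 2) ^ 2 := by positivity
      have h3 : 2 * (t - x) * y * y = 0 := by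
        have := div_eq_zero_iff.1 (by rw [div_mul_eq_mul_div] at h0; exact h0)
        rcases this with h | h
        · exact h
        · exact absurd h (ne_of_gt h2)
      have h4 : (t - x) * (2 * y * y) = 0 := by linear_combination h3
      rcases mul_eq_zero.1 h4 with h | h
      · linarith
      · exact absurd h (mul_ne_zero (mul_ne_zero two_ne_zero hy) hy)
    exact hkey hy haex
  -- Step 3: x < b
  have hxb : x < b := by
    by_contra hxb
    push_neg at hxb
    have hnonneg : 0 ≤ᵐ[μ] fun t : ℝ => -(((((t : ℂ) - z) ^ 2)⁻¹).im * y) := by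
      filter_upwards [hae] with t ht
      rw [hIm t]
      have h1 : t ≤ x := le_trans (hbS t ht) hxb
      have h2 : 0 < ((t - x) ^ 2 + y ^ 2) ^ 2 := by positivity
      rw [div_mul_eq_mul_div, neg_div']
      apply div_nonneg _ h2.le
      nlinarith [sq_nonneg y]
    have hint : MeasureTheory.Integrable
        (fun t : ℝ => -(((((t : ℂ) - z) ^ 2)⁻¹).im * y)) μ := (hIint.im.mul_const y).neg
    have hiz : ∫ t : ℝ, -(((((t : ℂ) - z) ^ 2)⁻¹).im * y) ∂μ = 0 := by
      rw [MeasureTheory.integral_neg, MeasureTheory.integral_mul_const, him0, zero_mul, neg_zero]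
    have heq := (MeasureTheory.integral_eq_zero_iff_of_nonneg_ae hnonneg hint).1 hiz
    have haex : ∀ᵐ t ∂μ, (t : ℝ) = x := by
      filter_upwards [hae, heq] with t ht h0
      simp only [Pi.zero_apply, neg_eq_zero] at h0
      rw [hIm t] at h0
      have h2 : (0 : ℝ) < ((t - x) ^ 2 + y ^ 2) ^ 2 := by positivity
      have h3 : 2 * (t - x) * y * y = 0 := by
        have := div_eq_zero_iff.1 (by rw [div_mul_eq_mul_div] at h0; exact h0)
        rcases this with h | h
        · exact h
        · exact absurd h (ne_of_gt h2)
      have h4 : (t - x) * (2 * y * y) = 0 := by linear_combination h3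
      rcases mul_eq_zero.1 h4 with h | h
      · linarith
      · exact absurd h (mul_ne_zero (mul_ne_zero two_ne_zero hy) hy)
    exact hkey hy haex
  refine ⟨hax, hxb, ?_⟩
  -- Step 4: |y| ≤ b - a
  by_contra hba
  push_neg at hba
  have h2 : (b - a) ^ 2 < y ^ 2 := by
    have h1 : (b - a) ^ 2 < |y| ^ 2 := by
      apply pow_lt_pow_left₀ hba (by linarith) two_ne_zero
    rwa [sq_abs] at h1
  have hnonneg : 0 ≤ᵐ[μ] fun t : ℝ => -((((t : ℂ) - z) ^ 2)⁻¹).re := by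
    filter_upwards [hae] with t ht
    rw [hRe t, neg_div']
    have ha1 := haS t ht
    have hb1 := hbS t ht
    have hsq : (t - x) ^ 2 ≤ (b - a) ^ 2 := sq_le_sq' (by linarith) (by linarith)
    have h2' : 0 < ((t - x) ^ 2 + y ^ 2) ^ 2 := by positivity
    apply div_nonneg _ h2'.le
    nlinarith
  have hint : MeasureTheory.Integrable
      (fun t : ℝ => -((((t : ℂ) - z) ^ 2)⁻¹).re) μ := hIint.re.neg
  have hiz : ∫ t : ℝ, -((((t : ℂ) - z) ^ 2)⁻¹).re ∂μ = 0 := by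
    rw [MeasureTheory.integral_neg, hre0, neg_zero]
  have heq := (MeasureTheory.integral_eq_zero_iff_of_nonneg_ae hnonneg hint).1 hiz
  obtain ⟨t, ht, h0⟩ := (hae.and heq).exists
  simp only [Pi.zero_apply, neg_eq_zero] at h0
  rw [hRe t] at h0
  have ha1 := haS t ht
  have hb1 := hbS t ht
  have hsq : (t - x) ^ 2 ≤ (b - a) ^ 2 := sq_le_sq' (by linarith) (by linarith)
  have h2' : 0 < ((t - x) ^ 2 + y ^ 2) ^ 2 := by positivity
  rcases div_eq_zero_iff.1 h0 with h | h
  · nlinarith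
  · exact absurd h (ne_of_gt h2')
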